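/- Let X be a GC_3 set and let ℓ be a 3-node line of X. Then |X_ℓ| = 3 if and only if there exists a maximal line M₀ of X such that no node of X lies on both M₀ and ℓ. In this case X_ℓ = X \ (ℓ ∪ M₀), X_ℓ is a GC_1 set, and every maximal line M ≠ M₀ of X intersects ℓ at a node of X and satisfies |M ∩ X_ℓ| = 2. -/

import Mathlib

open MvPolynomial

/-- Points of the plane `ℝ²`. -/
abbrev Pt : Type := Fin 2 → ℝ

/-- Bivariate real polynomials. -/
abbrev BPoly : Type := MvPolynomial (Fin 2) ℝ

/-- `X` is an `n`-poised node set: it has `N = (n+1)(n+2)/2` nodes and every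
interpolation problem with polynomials of total degree at most `n` has a unique solution. -/
def IsPoised (n : ℕ) (X : Set Pt) : Prop :=
  X.ncard = (n + 1) * (n + 2) / 2 ∧
  ∀ c : Pt → ℝ, ∃! p : BPoly, p.totalDegree ≤ n ∧ ∀ A ∈ X, eval A p = c A

/-- `p` is an `n`-fundamental polynomial of the node `A` for the node set `X`. -/
def IsFund (n : ℕ) (X : Set Pt) (A : Pt) (p : BPoly) : Prop :=
  p.totalDegree ≤ n ∧ eval A p = 1 ∧ ∀ B ∈ X, B ≠ A → eval B p = 0

/-- `X` is a `GC_n` set: it is `n`-poised and each node has a fundamental polynomial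
that is a product of `n` polynomials of degree `1`. -/
def IsGC (n : ℕ) (X : Set Pt) : Prop :=
  IsPoised n X ∧
  ∀ A ∈ X, ∃ p : BPoly, IsFund n X A p ∧
    ∃ f : Fin n → BPoly, (∀ i, (f i).totalDegree = 1) ∧ p = ∏ i, f i

/-- A line is the zero set of a polynomial of degree exactly `1`. -/
def IsLine (L : Set Pt) : Prop :=
  ∃ f : BPoly, f.totalDegree = 1 ∧ L = {x : Pt | eval x f = 0}

/-- A `k`-node line of `X`: a line passing through exactly `k` nodes of `X`. -/
def IsNodeLine (k : ℕ) (X : Set Pt) (L : Set Pt) : Prop :=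
  IsLine L ∧ (X ∩ L).ncard = k

/-- A maximal line of an `n`-poised set `X`: an `(n+1)`-node line. -/
def IsMaxLine (n : ℕ) (X : Set Pt) (L : Set Pt) : Prop :=
  IsNodeLine (n + 1) X L

/-- The node `A` uses the line `L`: a degree-1 polynomial whose zero set is `L`
divides the `n`-fundamental polynomial of `A` with respect to `X`. -/
def Uses (n : ℕ) (X : Set Pt) (L : Set Pt) (A : Pt) : Prop :=
  ∃ p f : BPoly, IsFund n X A p ∧ f.totalDegree = 1 ∧ L = {x : Pt | eval x f = 0} ∧ f ∣ p

/-- `X_ℓ`: the set of nodes of `X` that use the line `L`. -/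
def UseSet (n : ℕ) (X : Set Pt) (L : Set Pt) : Set Pt :=
  {A ∈ X | Uses n X L A}

namespace St5


/-- zero set -/
def ZS (f : BPoly) : Set Pt := {x : Pt | eval x f = 0}

@[simp] lemma mem_ZS {f : BPoly} {x : Pt} : x ∈ ZS f ↔ eval x f = 0 := Iff.rfl

lemma pt_ext_iff {x y : Pt} : x = y ↔ x 0 = y 0 ∧ x 1 = y 1 := by
  constructor
  · rintro rfl; exact ⟨rfl, rfl⟩
  · rintro ⟨h0, h1⟩; funext i; fin_cases i <;> assumption

lemma deg0_eq_C {p : BPoly} (h : p.totalDegree = 0) : p = C (coeff 0 p) := by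
  ext d
  rcases eq_or_ne d 0 with rfl | hd
  · simp
  · rw [coeff_C, if_neg (Ne.symm hd)]
    by_contra hc
    have hdin : d ∈ p.support := by simpa [mem_support_iff] using hc
    have h2 := (totalDegree_eq_zero_iff (Fin 2) p).1 h d hdin
    exact hd (Finsupp.ext fun x => h2 x)

lemma fin2_sum (d : Fin 2 →₀ ℕ) : d.sum (fun _ e => e) = d 0 + d 1 := by
  rw [Finsupp.sum_fintype]
  · exact Fin.sum_univ_two d
  · intro i; rfl

lemma fin2_classify (d : Fin 2 →₀ ℕ) (hd : d 0 + d 1 ≤ 1) :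
    d = 0 ∨ d = Finsupp.single 0 1 ∨ d = Finsupp.single 1 1 := by
  have h : (d 0 = 0 ∧ d 1 = 0) ∨ (d 0 = 1 ∧ d 1 = 0) ∨ (d 0 = 0 ∧ d 1 = 1) := by omega
  rcases h with ⟨h0, h1⟩ | ⟨h0, h1⟩ | ⟨h0, h1⟩
  · left; ext x; fin_cases x <;> simpa
  · right; left; ext x; fin_cases x <;> simp [Finsupp.single_apply, h0, h1]
  · right; right; ext x; fin_cases x <;> simp [Finsupp.single_apply, h0, h1]

/-- Structure of polynomials of total degree ≤ 1. -/
lemma repr_deg_le_one {p : BPoly} (h : p.totalDegree ≤ 1) :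
    p = C (coeff 0 p) + C (coeff (Finsupp.single 0 1) p) * X 0
      + C (coeff (Finsupp.single 1 1) p) * X 1 := by
  ext d
  by_cases hd : d 0 + d 1 ≤ 1
  · rcases fin2_classify d hd with rfl | rfl | rfl <;>
      simp [coeff_C, coeff_C_mul, coeff_X', Finsupp.single_eq_zero,
        Finsupp.single_left_inj, (by decide : (0 : Fin 2) ≠ 1)] <;>
      (intro h'; exact absurd (Finsupp.single_eq_zero.mp h'.symm) one_ne_zero)
  · have h1 : coeff d p = 0 := by
      apply coeff_eq_zero_of_totalDegree_lt
      have : ∑ i ∈ d.support, d i = d.sum (fun _ e => e) := rfl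
      rw [this, fin2_sum]
      omega
    rw [h1]
    have hd0 : d ≠ 0 := by
      intro h0; rw [h0] at hd; simp at hd
    have hds0 : d ≠ Finsupp.single 0 1 := by
      intro h0; rw [h0] at hd; simp [Finsupp.single_apply] at hd
    have hds1 : d ≠ Finsupp.single 1 1 := by
      intro h0; rw [h0] at hd; simp [Finsupp.single_apply] at hd
    simp [coeff_C, coeff_C_mul, coeff_X', Ne.symm hd0, Ne.symm hds0, Ne.symm hds1,
      fun hh => hds0 (id (Eq.symm hh)), fun hh => hds1 (id (Eq.symm hh))]

lemma eval_abc (a b c : ℝ) (z : Pt) :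
    eval z (C a + C b * X 0 + C c * X 1 : BPoly) = a + b * z 0 + c * z 1 := by
  simp

/-- affine representation of a polynomial of degree ≤ 1 -/
lemma repr_eval {p : BPoly} (h : p.totalDegree ≤ 1) :
    ∃ a b c : ℝ, (p.totalDegree = 1 → ¬(b = 0 ∧ c = 0)) ∧
      ∀ z : Pt, eval z p = a + b * z 0 + c * z 1 := by
  refine ⟨coeff 0 p, coeff (Finsupp.single 0 1) p, coeff (Finsupp.single 1 1) p, ?_, ?_⟩
  · rintro hdeg ⟨hb, hc⟩
    have := repr_deg_le_one h
    rw [hb, hc] at this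
    simp only [map_zero, zero_mul, add_zero] at this
    rw [this, totalDegree_C] at hdeg
    exact absurd hdeg (by norm_num)
  · intro z
    conv_lhs => rw [repr_deg_le_one h]
    exact eval_abc _ _ _ z

lemma deg_le_one_abc (a b c : ℝ) :
    (C a + C b * X 0 + C c * X 1 : BPoly).totalDegree ≤ 1 := by
  refine (totalDegree_add _ _).trans (max_le ((totalDegree_add _ _).trans (max_le ?_ ?_)) ?_)
  · simp [totalDegree_C]
  · exact (totalDegree_mul _ _).trans (by simp [totalDegree_C, totalDegree_X])
  · exact (totalDegree_mul _ _).trans (by simp [totalDegree_C, totalDegree_X])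

/-- construct a degree-one polynomial with given affine form -/
lemma mk_line (a b c : ℝ) (hbc : b ≠ 0 ∨ c ≠ 0) :
    ∃ f : BPoly, f.totalDegree = 1 ∧ ∀ z : Pt, eval z f = a + b * z 0 + c * z 1 := by
  refine ⟨C a + C b * X 0 + C c * X 1, ?_, eval_abc a b c⟩
  refine le_antisymm (deg_le_one_abc a b c) ?_
  by_contra hlt
  push_neg at hlt
  have hdeg0 : (C a + C b * X 0 + C c * X 1 : BPoly).totalDegree = 0 := by omega
  have hC := deg0_eq_C hdeg0
  set k := coeff 0 (C a + C b * X 0 + C c * X 1 : BPoly)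
  have hconst : ∀ z : Pt, a + b * z 0 + c * z 1 = k := by
    intro z
    rw [← eval_abc a b c z, hC]; simp
  rcases hbc with hb | hc
  · have h1 := hconst (fun _ => 0)
    have h2 := hconst (fun i => if i = 0 then 1 else 0)
    simp at h1 h2
    exact hb (by linarith)
  · have h1 := hconst (fun _ => 0)
    have h2 := hconst (fun i => if i = 1 then 1 else 0)
    simp at h1 h2
    exact hc (by linarith)

lemma deg_one_ne_zero {f : BPoly} (h : f.totalDegree = 1) : f ≠ 0 := by
  intro h0; rw [h0, totalDegree_zero] at h; exact one_ne_zero h.symm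

lemma line_through {x y : Pt} (hxy : x ≠ y) :
    ∃ f : BPoly, f.totalDegree = 1 ∧ eval x f = 0 ∧ eval y f = 0 := by
  set u := y 0 - x 0 with hu
  set v := y 1 - x 1 with hv
  have hbc : v ≠ 0 ∨ -u ≠ 0 := by
    by_contra hcon
    push_neg at hcon
    exact hxy (pt_ext_iff.2 ⟨by have := hcon.2; simp [hu] at this; linarith,
      by have := hcon.1; simp [hv] at this; linarith⟩)
  obtain ⟨f, hdeg, he⟩ := mk_line (-v * x 0 + u * x 1) v (-u) hbc
  refine ⟨f, hdeg, ?_, ?_⟩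
  · rw [he x]; ring
  · rw [he y]; simp only [hu, hv]; ring

lemma ZS_eq_of_two {f g : BPoly} (hf : f.totalDegree = 1) (hg : g.totalDegree = 1)
    {x y : Pt} (hxy : x ≠ y) (hfx : eval x f = 0) (hfy : eval y f = 0)
    (hgx : eval x g = 0) (hgy : eval y g = 0) : ZS f = ZS g := by
  obtain ⟨a, b, c, hbc0, he⟩ := repr_eval hf.le
  obtain ⟨a', b', c', hbc0', he'⟩ := repr_eval hg.le
  have hbc := hbc0 hf
  have hbc' := hbc0' hg
  have hx1 : a + b * x 0 + c * x 1 = 0 := by rw [← he x]; exact hfx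
  have hy1 : a + b * y 0 + c * y 1 = 0 := by rw [← he y]; exact hfy
  have hx2 : a' + b' * x 0 + c' * x 1 = 0 := by rw [← he' x]; exact hgx
  have hy2 : a' + b' * y 0 + c' * y 1 = 0 := by rw [← he' y]; exact hgy
  set u := y 0 - x 0 with hu
  set v := y 1 - x 1 with hv
  have huv : u ≠ 0 ∨ v ≠ 0 := by
    by_contra hcon
    push_neg at hcon
    exact hxy (pt_ext_iff.2 ⟨by have := hcon.1; simp [hu] at this; linarith,
      by have := hcon.2; simp [hv] at this; linarith⟩)
  have h1 : b * u + c * v = 0 := by simp only [hu, hv]; linear_combination hy1 - hx1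
  have h2 : b' * u + c' * v = 0 := by simp only [hu, hv]; linear_combination hy2 - hx2
  have det : b * c' - c * b' = 0 := by
    rcases huv with h | h
    · have h3 : (b * c' - c * b') * u = c' * (b * u + c * v) - c * (b' * u + c' * v) := by ring
      rw [h1, h2] at h3
      simpa [h] using mul_eq_zero.mp (by linarith : (b * c' - c * b') * u = 0)
    · have h3 : (b * c' - c * b') * v = -b' * (b * u + c * v) + b * (b' * u + c' * v) := by ring
      rw [h1, h2] at h3
      simpa [h] using mul_eq_zero.mp (by linarith : (b * c' - c * b') * v = 0)
  -- find scalar t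
  have key : ∃ t : ℝ, t ≠ 0 ∧ a = t * a' ∧ b = t * b' ∧ c = t * c' := by
    have hbc'2 : b' ≠ 0 ∨ c' ≠ 0 := by tauto
    rcases hbc'2 with h | h
    · refine ⟨b / b', ?_, ?_, ?_, ?_⟩
      · intro h0
        have hb0 : b = 0 := by field_simp at h0; simpa using h0
        have hc0 : c = 0 := by
          rw [hb0] at det; simp at det
          rcases det with h' | h' ; exact h' ; exact absurd h' h
        exact hbc ⟨hb0, hc0⟩
      · rw [div_mul_eq_mul_div, eq_div_iff h]
        linear_combination b' * hx1 - b * hx2 + x 1 * det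
      · field_simp
      · rw [div_mul_eq_mul_div, eq_div_iff h]
        linear_combination -det
    · refine ⟨c / c', ?_, ?_, ?_, ?_⟩
      · intro h0
        have hc0 : c = 0 := by field_simp at h0; simpa using h0
        have hb0 : b = 0 := by
          rw [hc0] at det; simp at det
          rcases det with h' | h' ; exact h' ; exact absurd h' h
        exact hbc ⟨hb0, hc0⟩
      · rw [div_mul_eq_mul_div, eq_div_iff h]
        linear_combination c' * hx1 - c * hx2 - x 0 * det
      · rw [div_mul_eq_mul_div, eq_div_iff h]
        linear_combination det
      · field_simp
  obtain ⟨t, ht, ha, hb, hc⟩ := key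
  ext z
  simp only [mem_ZS, he z, he' z]
  constructor
  · intro hz
    have h4 : t * (a' + b' * z 0 + c' * z 1) = 0 := by
      linear_combination hz - ha - z 0 * hb - z 1 * hc
    exact (mul_eq_zero.mp h4).resolve_left ht
  · intro hz
    linear_combination t * hz + ha + z 0 * hb + z 1 * hc

lemma ZS_inter_subsingleton {f g : BPoly} (hf : f.totalDegree = 1) (hg : g.totalDegree = 1)
    (hne : ZS f ≠ ZS g) : (ZS f ∩ ZS g).Subsingleton := by
  intro x hx y hy
  by_contra hxy
  exact hne (ZS_eq_of_two hf hg hxy hx.1 hy.1 hx.2 hy.2)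

lemma line_four {f : BPoly} (hf : f.totalDegree = 1) :
    ∃ z : Fin 4 → Pt, Function.Injective z ∧ ∀ t, z t ∈ ZS f := by
  obtain ⟨a, b, c, hbc0, he⟩ := repr_eval hf.le
  have hbc := hbc0 hf
  rcases (by tauto : b ≠ 0 ∨ c ≠ 0) with h | h
  · refine ⟨fun t => fun i => if i = 0 then (-a - c * (t : ℕ)) / b else (t : ℕ), ?_, ?_⟩
    · intro s t hst
      have := congrFun hst 1
      simp at this
      exact Fin.ext (Nat.cast_injective this)
    · intro t
      simp only [mem_ZS, he]
      rw [if_pos trivial, if_neg (by decide)]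
      field_simp
      ring
  · refine ⟨fun t => fun i => if i = 0 then (t : ℕ) else (-a - b * (t : ℕ)) / c, ?_, ?_⟩
    · intro s t hst
      have := congrFun hst 0
      simp at this
      exact Fin.ext (Nat.cast_injective this)
    · intro t
      simp only [mem_ZS, he]
      rw [if_pos trivial, if_neg (by decide)]
      field_simp
      try ring

lemma ncard_le_one_ss {s : Set Pt} (hs : s.Subsingleton) : s.ncard ≤ 1 := by
  rcases hs.eq_empty_or_singleton with rfl | ⟨a, rfl⟩ <;> simp

lemma isLine_ZS {f : BPoly} (hf : f.totalDegree = 1) : IsLine (ZS f) := ⟨f, hf, rfl⟩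

lemma poised_finite {X : Set Pt} (h : IsPoised 3 X) : X.Finite := by
  apply Set.finite_of_ncard_ne_zero
  rw [h.1]; norm_num

lemma fund_unique {X : Set Pt} (hP : IsPoised 3 X) {A : Pt} (hA : A ∈ X) {p q : BPoly}
    (hp : IsFund 3 X A p) (hq : IsFund 3 X A q) : p = q := by
  obtain ⟨r, _, hu⟩ := hP.2 (fun B => if B = A then 1 else 0)
  have key : ∀ s : BPoly, IsFund 3 X A s →
      s.totalDegree ≤ 3 ∧ ∀ B ∈ X, eval B s = if B = A then 1 else 0 := by
    rintro s ⟨h1, h2, h3⟩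
    refine ⟨h1, fun B hB => ?_⟩
    rcases eq_or_ne B A with rfl | hne
    · simpa using h2
    · simp [hne, h3 B hB hne]
  rw [hu p (key p hp), hu q (key q hq)]

lemma no_vanish {X : Set Pt} (hP : IsPoised 3 X) {p : BPoly} (hd : p.totalDegree ≤ 3)
    (hv : ∀ B ∈ X, eval B p = 0) : p = 0 := by
  obtain ⟨q, _, hu⟩ := hP.2 (fun _ => 0)
  have h1 := hu p ⟨hd, by simpa using hv⟩
  have h2 := hu 0 ⟨by simp, by simp⟩
  rw [h1, h2]

lemma prod3 (g : Fin 3 → BPoly) (z : Pt) :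
    eval z (∏ i, g i) = eval z (g 0) * eval z (g 1) * eval z (g 2) := by
  rw [Fin.prod_univ_three, map_mul, map_mul]

lemma line_in_union {f g0 g1 g2 : BPoly} (hf : f.totalDegree = 1) (h0 : g0.totalDegree = 1)
    (h1 : g1.totalDegree = 1) (h2 : g2.totalDegree = 1)
    (hsub : ZS f ⊆ ZS g0 ∪ ZS g1 ∪ ZS g2) :
    ZS f = ZS g0 ∨ ZS f = ZS g1 ∨ ZS f = ZS g2 := by
  by_contra hcon
  push_neg at hcon
  obtain ⟨hn0, hn1, hn2⟩ := hcon
  set g : Fin 3 → BPoly := ![g0, g1, g2] with hg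
  have hgdeg : ∀ i, (g i).totalDegree = 1 := by
    intro i; fin_cases i <;> simpa [hg]
  have hnei : ∀ i, ZS f ≠ ZS (g i) := by
    intro i; fin_cases i <;> simpa [hg]
  obtain ⟨z, hinj, hz⟩ := line_four hf
  have hch : ∀ t : Fin 4, ∃ i : Fin 3, z t ∈ ZS (g i) := by
    intro t
    rcases hsub (hz t) with (h | h) | h
    · exact ⟨0, by simpa [hg]⟩
    · exact ⟨1, by simpa [hg]⟩
    · exact ⟨2, by simpa [hg]⟩
  choose F hF using hch
  obtain ⟨s, t, hst, hFst⟩ := Fintype.exists_ne_map_eq_of_card_lt F (by simp)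
  have hss := ZS_inter_subsingleton hf (hgdeg (F s)) (hnei (F s))
  have heq : z s = z t := hss ⟨hz s, hF s⟩ ⟨hz t, by rw [hFst]; exact hF t⟩
  exact hst (hinj heq)

lemma factors_ne_zero {X : Set Pt} {A : Pt} {p' : BPoly} {g : Fin 3 → BPoly}
    (hfund : IsFund 3 X A p') (hprod : p' = ∏ i, g i) (i : Fin 3) : eval A (g i) ≠ 0 := by
  intro h0
  have h1 : eval A p' = 0 := by
    rw [hprod, map_prod]
    exact Finset.prod_eq_zero (Finset.mem_univ i) h0
  rw [hfund.2.1] at h1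
  exact one_ne_zero h1

lemma line_le_four {X : Set Pt} (hX : IsGC 3 X) {f : BPoly} (hf : f.totalDegree = 1) :
    (X ∩ ZS f).ncard ≤ 4 := by
  by_contra h5
  push_neg at h5
  have hXfin := poised_finite hX.1
  obtain ⟨A, hA⟩ := Set.nonempty_of_ncard_ne_zero (s := X ∩ ZS f) (by omega)
  obtain ⟨p', hfund', g, hgdeg, hprod⟩ := hX.2 A hA.1
  have hAg := factors_ne_zero hfund' hprod
  have hss : ∀ i, (ZS (g i) ∩ ZS f).Subsingleton := by
    intro i
    refine ZS_inter_subsingleton (hgdeg i) hf (fun he => ?_)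
    have : A ∈ ZS (g i) := he.symm ▸ hA.2
    exact hAg i this
  have hcov : (X ∩ ZS f) \ {A} ⊆
      (ZS (g 0) ∩ ZS f) ∪ (ZS (g 1) ∩ ZS f) ∪ (ZS (g 2) ∩ ZS f) := by
    rintro B ⟨⟨hBX, hBf⟩, hBA⟩
    have h0 : eval B p' = 0 := hfund'.2.2 B hBX (by simpa using hBA)
    rw [hprod] at h0
    rw [prod3] at h0
    rcases mul_eq_zero.mp h0 with h | h
    · rcases mul_eq_zero.mp h with h | h
      · exact Or.inl (Or.inl ⟨h, hBf⟩)
      · exact Or.inl (Or.inr ⟨h, hBf⟩)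
    · exact Or.inr ⟨h, hBf⟩
  have hfin : ((ZS (g 0) ∩ ZS f) ∪ (ZS (g 1) ∩ ZS f) ∪ (ZS (g 2) ∩ ZS f)).Finite :=
    (((hss 0).finite.union (hss 1).finite).union (hss 2).finite)
  have hle : ((X ∩ ZS f) \ {A}).ncard ≤ 3 := by
    refine (Set.ncard_le_ncard hcov hfin).trans ?_
    refine (Set.ncard_union_le _ _).trans ?_
    have := Set.ncard_union_le (ZS (g 0) ∩ ZS f) (ZS (g 1) ∩ ZS f)
    have l0 := ncard_le_one_ss (hss 0)
    have l1 := ncard_le_one_ss (hss 1)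
    have l2 := ncard_le_one_ss (hss 2)
    omega
  have heq : ((X ∩ ZS f) \ {A}).ncard = (X ∩ ZS f).ncard - 1 :=
    Set.ncard_diff_singleton_of_mem hA
  omega

lemma user_lines {X ℓ : Set Pt} (hX : IsGC 3 X) {A : Pt} (hA : A ∈ X) (hu : Uses 3 X ℓ A) :
    ∃ g h : BPoly, g.totalDegree = 1 ∧ h.totalDegree = 1 ∧ A ∉ ℓ ∧ A ∉ ZS g ∧ A ∉ ZS h ∧
      (∀ B ∈ X, B ∈ ℓ ∨ B ∈ ZS g ∨ B ∈ ZS h ∨ B = A) := by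
  obtain ⟨p, f, hfund, hdegf, hleq, hdvd⟩ := hu
  obtain ⟨p', hfund', g, hgdeg, hprod⟩ := hX.2 A hA
  have hpp : p = p' := fund_unique hX.1 hA hfund hfund'
  have hℓZS : ℓ = ZS f := hleq
  have hAg := factors_ne_zero hfund' hprod
  have hsub : ZS f ⊆ ZS (g 0) ∪ ZS (g 1) ∪ ZS (g 2) := by
    intro z hz
    obtain ⟨r, hr⟩ := hdvd
    have h0 : eval z p' = 0 := by
      rw [← hpp, hr, map_mul]
      rw [mem_ZS] at hz
      rw [hz, zero_mul]
    rw [hprod, prod3] at h0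
    rcases mul_eq_zero.mp h0 with h | h
    · rcases mul_eq_zero.mp h with h | h
      · exact Or.inl (Or.inl h)
      · exact Or.inl (Or.inr h)
    · exact Or.inr h
  have hcover : ∀ B ∈ X, B ≠ A → B ∈ ZS (g 0) ∨ B ∈ ZS (g 1) ∨ B ∈ ZS (g 2) := by
    intro B hB hBA
    have h0 : eval B p' = 0 := hfund'.2.2 B hB hBA
    rw [hprod, prod3] at h0
    rcases mul_eq_zero.mp h0 with h | h
    · rcases mul_eq_zero.mp h with h | h
      · exact Or.inl h
      · exact Or.inr (Or.inl h)
    · exact Or.inr (Or.inr h)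
  have hAnot : ∀ i, A ∉ ZS (g i) := fun i h => hAg i h
  rcases line_in_union hdegf (hgdeg 0) (hgdeg 1) (hgdeg 2) hsub with he | he | he
  · refine ⟨g 1, g 2, hgdeg 1, hgdeg 2, ?_, hAnot 1, hAnot 2, ?_⟩
    · rw [hℓZS, he]; exact hAnot 0
    · intro B hB
      by_cases hBA : B = A
      · exact Or.inr (Or.inr (Or.inr hBA))
      rcases hcover B hB hBA with h | h | h
      · exact Or.inl (by rw [hℓZS, he]; exact h)
      · exact Or.inr (Or.inl h)
      · exact Or.inr (Or.inr (Or.inl h))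
  · refine ⟨g 0, g 2, hgdeg 0, hgdeg 2, ?_, hAnot 0, hAnot 2, ?_⟩
    · rw [hℓZS, he]; exact hAnot 1
    · intro B hB
      by_cases hBA : B = A
      · exact Or.inr (Or.inr (Or.inr hBA))
      rcases hcover B hB hBA with h | h | h
      · exact Or.inr (Or.inl h)
      · exact Or.inl (by rw [hℓZS, he]; exact h)
      · exact Or.inr (Or.inr (Or.inl h))
  · refine ⟨g 0, g 1, hgdeg 0, hgdeg 1, ?_, hAnot 0, hAnot 1, ?_⟩
    · rw [hℓZS, he]; exact hAnot 2
    · intro B hB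
      by_cases hBA : B = A
      · exact Or.inr (Or.inr (Or.inr hBA))
      rcases hcover B hB hBA with h | h | h
      · exact Or.inr (Or.inl h)
      · exact Or.inr (Or.inr (Or.inl h))
      · exact Or.inl (by rw [hℓZS, he]; exact h)

lemma cover_count {S : Set Pt} (hfin : S.Finite) {P : Pt} (hPS : P ∈ S) (hS7 : S.ncard = 7)
    {h1 h2 : BPoly} (hcov : S \ {P} ⊆ ZS h1 ∪ ZS h2)
    (hb1 : (ZS h1 ∩ S).ncard ≤ 3) (hb2 : (ZS h2 ∩ S).ncard ≤ 3) :
    ((ZS h2 ∩ S) \ ZS h1).ncard = 3 ∧ 3 ≤ (ZS h1 ∩ S).ncard := by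
  have h6 : (S \ {P}).ncard = 6 := by
    rw [Set.ncard_diff_singleton_of_mem hPS, hS7]
  have hsub : S \ {P} ⊆ (ZS h1 ∩ S) ∪ ((ZS h2 ∩ S) \ ZS h1) := by
    rintro z ⟨hzS, hzP⟩
    rcases hcov ⟨hzS, hzP⟩ with h | h
    · exact Or.inl ⟨h, hzS⟩
    · by_cases h1' : z ∈ ZS h1
      · exact Or.inl ⟨h1', hzS⟩
      · exact Or.inr ⟨⟨h, hzS⟩, h1'⟩
  have hKle : ((ZS h2 ∩ S) \ ZS h1).ncard ≤ 3 :=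
    le_trans (Set.ncard_le_ncard Set.diff_subset (hfin.inter_of_right _)) hb2
  have hfin2 : ((ZS h1 ∩ S) ∪ ((ZS h2 ∩ S) \ ZS h1)).Finite :=
    (hfin.inter_of_right _).union ((hfin.inter_of_right _).diff)
  have hle : (S \ {P}).ncard ≤ (ZS h1 ∩ S).ncard + ((ZS h2 ∩ S) \ ZS h1).ncard :=
    le_trans (Set.ncard_le_ncard hsub hfin2) (Set.ncard_union_le _ _)
  omega

lemma core_contra {S : Set Pt} (hfin : S.Finite) {A B : Pt} (hAS : A ∈ S) (hBS : B ∈ S)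
    (hAB : A ≠ B) (hS7 : S.ncard = 7)
    {f1 f2 g1 g2 : BPoly} (hdf1 : f1.totalDegree = 1) (hdf2 : f2.totalDegree = 1)
    (hdg1 : g1.totalDegree = 1) (hdg2 : g2.totalDegree = 1)
    (hNC : ∀ f : BPoly, f.totalDegree = 1 → (ZS f ∩ S).ncard ≤ 3)
    (hAn1 : A ∉ ZS f1) (hAn2 : A ∉ ZS f2) (hcovA : S \ {A} ⊆ ZS f1 ∪ ZS f2)
    (hBn1 : B ∉ ZS g1) (hBn2 : B ∉ ZS g2) (hcovB : S \ {B} ⊆ ZS g1 ∪ ZS g2)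
    (hBf1 : B ∈ ZS f1)
    {w x : Pt} (hwx : w ≠ x) (hw : w ∈ (ZS f2 ∩ S) \ ZS f1) (hx : x ∈ (ZS f2 ∩ S) \ ZS f1)
    (hwg : w ∈ ZS g1) (hxg : x ∈ ZS g1) : False := by
  -- the lines f2 and g1 coincide
  have h21 : ZS f2 = ZS g1 :=
    ZS_eq_of_two hdf2 hdg1 hwx hw.1.1 hx.1.1 hwg hxg
  have hBf2 : B ∉ ZS f2 := by rw [h21]; exact hBn1
  have hAg2 : A ∈ ZS g2 := by
    rcases hcovB ⟨hAS, by simpa using hAB⟩ with h | h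
    · exact absurd (h21 ▸ h) hAn2
    · exact h
  -- counting for A's lines
  have hcc := cover_count hfin hAS hS7 hcovA (hNC f1 hdf1) (hNC f2 hdf2)
  have hZ1 : 3 ≤ (ZS f1 ∩ S).ncard := hcc.2
  -- f1 ≠ f2 as lines
  have hne12 : ZS f1 ≠ ZS f2 := fun h => hBf2 (h ▸ hBf1)
  have hss12 : (ZS f1 ∩ ZS f2).Subsingleton := ZS_inter_subsingleton hdf1 hdf2 hne12
  -- find u ∈ ZS f1 ∩ S, u ≠ B, u ∉ ZS f2
  have hfinZ1 : (ZS f1 ∩ S).Finite := hfin.inter_of_right _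
  have hu : ((ZS f1 ∩ S) \ ({B} ∪ ZS f2)).Nonempty := by
    apply Set.nonempty_of_ncard_ne_zero
    have hsub : ZS f1 ∩ S ⊆ ((ZS f1 ∩ S) \ ({B} ∪ ZS f2)) ∪ {B} ∪ (ZS f1 ∩ ZS f2) := by
      rintro z ⟨hz1, hzS⟩
      by_cases hb : z = B
      · exact Or.inl (Or.inr (by simp [hb]))
      · by_cases h2 : z ∈ ZS f2
        · exact Or.inr ⟨hz1, h2⟩
        · exact Or.inl (Or.inl ⟨⟨hz1, hzS⟩, by simp [hb, h2]⟩)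
    have hfin3 : ((((ZS f1 ∩ S) \ ({B} ∪ ZS f2)) ∪ {B}) ∪ (ZS f1 ∩ ZS f2)).Finite :=
      ((hfinZ1.diff).union (Set.finite_singleton B)).union hss12.finite
    have hle := le_trans (Set.ncard_le_ncard hsub hfin3)
      (le_trans (Set.ncard_union_le _ _) (add_le_add (Set.ncard_union_le _ _) le_rfl))
    have l1 := ncard_le_one_ss hss12
    have l2 : ({B} : Set Pt).ncard = 1 := Set.ncard_singleton B
    omega
  obtain ⟨u, ⟨⟨hu1, huS⟩, hu2⟩⟩ := hu
  simp only [Set.mem_union, Set.mem_singleton_iff, not_or] at hu2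
  obtain ⟨huB, huf2⟩ := hu2
  have hug2 : u ∈ ZS g2 := by
    rcases hcovB ⟨huS, by simpa using huB⟩ with h | h
    · exact absurd (h21 ▸ h) huf2
    · exact h
  -- counting for B's lines : the set W := (ZS g2 ∩ S) \ ZS g1 has 3 elements
  have hccB := cover_count hfin hBS hS7 hcovB (hNC g1 hdg1) (hNC g2 hdg2)
  have hW3 : ((ZS g2 ∩ S) \ ZS g1).ncard = 3 := hccB.1
  -- A and u belong to W
  have hAW : A ∈ (ZS g2 ∩ S) \ ZS g1 := ⟨⟨hAg2, hAS⟩, by rw [← h21]; exact hAn2⟩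
  have huW : u ∈ (ZS g2 ∩ S) \ ZS g1 := ⟨⟨hug2, huS⟩, by rw [← h21]; exact huf2⟩
  have hAu : A ≠ u := fun h => hAn1 (h ▸ hu1)
  -- a third element t of W
  have ht : (((ZS g2 ∩ S) \ ZS g1) \ ({A} ∪ {u})).Nonempty := by
    apply Set.nonempty_of_ncard_ne_zero
    have hsub : (ZS g2 ∩ S) \ ZS g1 ⊆
        (((ZS g2 ∩ S) \ ZS g1) \ ({A} ∪ {u})) ∪ ({A} ∪ {u}) := by
      intro z hz
      by_cases h : z ∈ ({A} ∪ {u} : Set Pt)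
      · exact Or.inr h
      · exact Or.inl ⟨hz, h⟩
    have hfinW : (((ZS g2 ∩ S) \ ZS g1) \ ({A} ∪ {u}) ∪ ({A} ∪ {u})).Finite :=
      (((hfin.inter_of_right _).diff).diff).union
        ((Set.finite_singleton A).union (Set.finite_singleton u))
    have hle := le_trans (Set.ncard_le_ncard hsub hfinW) (Set.ncard_union_le _ _)
    have l2 : ({A} ∪ {u} : Set Pt).ncard ≤ 2 := by
      refine le_trans (Set.ncard_union_le _ _) ?_
      simp
    omega
  obtain ⟨t, ⟨⟨⟨htg2, htS⟩, htg1⟩, htAu⟩⟩ := ht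
  simp only [Set.mem_union, Set.mem_singleton_iff, not_or] at htAu
  obtain ⟨htA, htu⟩ := htAu
  have htf2 : t ∉ ZS f2 := by rw [h21]; exact htg1
  have htf1 : t ∈ ZS f1 := by
    rcases hcovA ⟨htS, by simpa using htA⟩ with h | h
    · exact h
    · exact absurd h htf2
  -- now u and t are two distinct common points of f1 and g2
  have h12 : ZS f1 = ZS g2 :=
    ZS_eq_of_two hdf1 hdg2 (Ne.symm htu) hu1 htf1 hug2 htg2
  exact hBn2 (h12 ▸ hBf1)

/-- Forward direction : three users force a maximal line missing ℓ. -/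
lemma forward {X ℓ : Set Pt} (hX : IsGC 3 X) (hℓ : IsNodeLine 3 X ℓ)
    (h3 : (UseSet 3 X ℓ).ncard = 3) :
    ∃ M₀ : Set Pt, IsMaxLine 3 X M₀ ∧ M₀ ∩ ℓ ∩ X = ∅ := by
  by_contra hno
  push_neg at hno
  have hXfin := poised_finite hX.1
  have hX10 : X.ncard = 10 := by simpa using hX.1.1
  set S : Set Pt := X \ ℓ with hSdef
  have hSfin : S.Finite := hXfin.diff
  have hS7 : S.ncard = 7 := by
    have hXl : X \ ℓ = X \ (X ∩ ℓ) := Set.diff_self_inter.symm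
    rw [hSdef, hXl, Set.ncard_diff Set.inter_subset_left (hXfin.inter_of_left _), hX10, hℓ.2]
  -- no four nodes of S are collinear
  have hNC : ∀ f : BPoly, f.totalDegree = 1 → (ZS f ∩ S).ncard ≤ 3 := by
    intro f hf
    by_contra h4
    push_neg at h4
    have hle4 := line_le_four hX hf
    have hsub : ZS f ∩ S ⊆ X ∩ ZS f := fun z hz => ⟨hz.2.1, hz.1⟩
    have heq : ZS f ∩ S = X ∩ ZS f :=
      Set.eq_of_subset_of_ncard_le hsub (by omega) (hXfin.inter_of_left _)
    have hmax : IsMaxLine 3 X (ZS f) := ⟨isLine_ZS hf, by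
      have : 4 ≤ (X ∩ ZS f).ncard := by rw [← heq]; omega
      omega⟩
    obtain ⟨z, ⟨hzf, hzl⟩, hzX⟩ := hno (ZS f) hmax
    have hzmem : z ∈ ZS f ∩ S := heq ▸ (⟨hzX, hzf⟩ : z ∈ X ∩ ZS f)
    exact hzmem.2.2 hzl
  -- two distinct users
  have hUfin : (UseSet 3 X ℓ).Finite := hXfin.subset (fun z hz => hz.1)
  obtain ⟨A, B, hAU, hBU, hABne⟩ := (Set.one_lt_ncard_iff hUfin).1 (by omega)
  obtain ⟨hAX, hAuse⟩ := hAU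
  obtain ⟨hBX, hBuse⟩ := hBU
  obtain ⟨f1, f2, hdf1, hdf2, hAnl, hAn1, hAn2, hcovA0⟩ := user_lines hX hAX hAuse
  obtain ⟨g1, g2, hdg1, hdg2, hBnl, hBn1, hBn2, hcovB0⟩ := user_lines hX hBX hBuse
  have hAS : A ∈ S := ⟨hAX, hAnl⟩
  have hBS : B ∈ S := ⟨hBX, hBnl⟩
  have hcovA : S \ {A} ⊆ ZS f1 ∪ ZS f2 := by
    rintro z ⟨⟨hzX, hznl⟩, hzA⟩
    rcases hcovA0 z hzX with h | h | h | h
    · exact absurd h hznl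
    · exact Or.inl h
    · exact Or.inr h
    · exact absurd h (by simpa using hzA)
  have hcovB : S \ {B} ⊆ ZS g1 ∪ ZS g2 := by
    rintro z ⟨⟨hzX, hznl⟩, hzB⟩
    rcases hcovB0 z hzX with h | h | h | h
    · exact absurd h hznl
    · exact Or.inl h
    · exact Or.inr h
    · exact absurd h (by simpa using hzB)
  -- wlog B ∈ ZS f1 : package the rest
  have main : ∀ F1 F2 : BPoly, F1.totalDegree = 1 → F2.totalDegree = 1 →
      A ∉ ZS F1 → A ∉ ZS F2 → S \ {A} ⊆ ZS F1 ∪ ZS F2 → B ∈ ZS F1 → False := by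
    intro F1 F2 hdF1 hdF2 hAnF1 hAnF2 hcovF hBF1
    -- K has three elements
    have hK3 : ((ZS F2 ∩ S) \ ZS F1).ncard = 3 :=
      (cover_count hSfin hAS hS7 hcovF (hNC F1 hdF1) (hNC F2 hdF2)).1
    set K : Set Pt := (ZS F2 ∩ S) \ ZS F1 with hKdef
    have hKfin : K.Finite := (hSfin.inter_of_right _).diff
    have hBK : B ∉ K := fun h => h.2 hBF1
    have hKSB : K ⊆ S \ {B} := by
      rintro z ⟨⟨hz2, hzS⟩, hz1⟩
      exact ⟨hzS, by simp; rintro rfl; exact hBK ⟨⟨hz2, hzS⟩, hz1⟩⟩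
    have hKcov : K ⊆ (K ∩ ZS g1) ∪ (K ∩ ZS g2) := by
      intro z hz
      rcases hcovB (hKSB hz) with h | h
      · exact Or.inl ⟨hz, h⟩
      · exact Or.inr ⟨hz, h⟩
    have hle := le_trans (Set.ncard_le_ncard hKcov
      ((hKfin.inter_of_left _).union (hKfin.inter_of_left _))) (Set.ncard_union_le _ _)
    have h2 : 2 ≤ (K ∩ ZS g1).ncard ∨ 2 ≤ (K ∩ ZS g2).ncard := by omega
    rcases h2 with h | h
    · obtain ⟨w, x, hw, hx, hwx⟩ := (Set.one_lt_ncard_iff (s := K ∩ ZS g1) (hKfin.inter_of_left _)).1 (by omega)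
      exact core_contra hSfin hAS hBS hABne hS7 hdF1 hdF2 hdg1 hdg2 hNC
        hAnF1 hAnF2 hcovF hBn1 hBn2 hcovB hBF1 hwx hw.1 hx.1 hw.2 hx.2
    · obtain ⟨w, x, hw, hx, hwx⟩ := (Set.one_lt_ncard_iff (s := K ∩ ZS g2) (hKfin.inter_of_left _)).1 (by omega)
      have hcovB' : S \ {B} ⊆ ZS g2 ∪ ZS g1 := fun z hz => (hcovB hz).symm
      exact core_contra hSfin hAS hBS hABne hS7 hdF1 hdF2 hdg2 hdg1 hNC
        hAnF1 hAnF2 hcovF hBn2 hBn1 hcovB' hBF1 hwx hw.1 hx.1 hw.2 hx.2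
  have hBAS : B ∈ S \ {A} := ⟨hBS, by simpa using Ne.symm hABne⟩
  rcases hcovA hBAS with h | h
  · exact main f1 f2 hdf1 hdf2 hAn1 hAn2 hcovA h
  · exact main f2 f1 hdf2 hdf1 hAn2 hAn1 (fun z hz => (hcovA hz).symm) h

section Backward
variable {X ℓ M : Set Pt}

lemma Rcard (hX : IsGC 3 X) (hℓ : IsNodeLine 3 X ℓ) (hM : IsMaxLine 3 X M)
    (hdisj : M ∩ ℓ ∩ X = ∅) : (X \ (ℓ ∪ M)).ncard = 3 := by
  have hXfin := poised_finite hX.1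
  have hX10 : X.ncard = 10 := by simpa using hX.1.1
  have hM4 : (X ∩ M).ncard = 4 := hM.2
  have hrw : X \ (ℓ ∪ M) = X \ ((X ∩ ℓ) ∪ (X ∩ M)) := by
    ext z; simp only [Set.mem_diff, Set.mem_union, Set.mem_inter_iff]; tauto
  have hd : Disjoint (X ∩ ℓ) (X ∩ M) := by
    rw [Set.disjoint_iff]
    rintro z ⟨⟨hzX, hzl⟩, ⟨-, hzM⟩⟩
    have : z ∈ M ∩ ℓ ∩ X := ⟨⟨hzM, hzl⟩, hzX⟩
    rw [hdisj] at this
    exact this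
  have hu : ((X ∩ ℓ) ∪ (X ∩ M)).ncard = 7 := by
    rw [Set.ncard_union_eq hd (hXfin.inter_of_left _) (hXfin.inter_of_left _), hℓ.2, hM4]
  rw [hrw, Set.ncard_diff (Set.union_subset Set.inter_subset_left Set.inter_subset_left)
    ((hXfin.inter_of_left _).union (hXfin.inter_of_left _)), hX10, hu]

lemma noncol (hX : IsGC 3 X) (hℓ : IsNodeLine 3 X ℓ) (hM : IsMaxLine 3 X M)
    {f : BPoly} (hf : f.totalDegree = 1) : ¬ (X \ (ℓ ∪ M) ⊆ ZS f) := by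
  intro hsub
  obtain ⟨fl, hfl, hfleq⟩ := hℓ.1
  obtain ⟨fm, hfm, hfmeq⟩ := hM.1
  have hlZ : ℓ = ZS fl := hfleq
  have hmZ : M = ZS fm := hfmeq
  set q : BPoly := fl * (fm * f) with hq
  have hdq : q.totalDegree ≤ 3 := by
    refine (totalDegree_mul _ _).trans ?_
    have h2 : (fm * f).totalDegree ≤ 2 := by
      refine (totalDegree_mul _ _).trans ?_
      omega
    omega
  have hvan : ∀ B ∈ X, eval B q = 0 := by
    intro B hB
    rw [hq, map_mul, map_mul]
    by_cases h1 : B ∈ ℓ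
    · rw [hlZ] at h1; rw [mem_ZS] at h1; rw [h1, zero_mul]
    · by_cases h2 : B ∈ M
      · rw [hmZ] at h2; rw [mem_ZS] at h2; rw [h2, zero_mul, mul_zero]
      · have : B ∈ ZS f := hsub ⟨hB, by simp [h1, h2]⟩
        rw [mem_ZS] at this; rw [this, mul_zero, mul_zero]
  have hq0 : q = 0 := no_vanish hX.1 hdq hvan
  exact (mul_ne_zero (deg_one_ne_zero hfl)
    (mul_ne_zero (deg_one_ne_zero hfm) (deg_one_ne_zero hf))) hq0

/-- helper: pick presentations of the 3-element complement around a chosen point -/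
lemma three_rep {R : Set Pt} (hR3 : R.ncard = 3) {P : Pt} (hP : P ∈ R) :
    ∃ Q R' : Pt, Q ≠ R' ∧ P ≠ Q ∧ P ≠ R' ∧ R = {P, Q, R'} := by
  obtain ⟨x, y, z, hxy, hxz, hyz, rfl⟩ := Set.ncard_eq_three.1 hR3
  simp only [Set.mem_insert_iff, Set.mem_singleton_iff] at hP
  rcases hP with rfl | rfl | rfl
  · exact ⟨y, z, hyz, hxy, hxz, rfl⟩
  · refine ⟨x, z, hxz, Ne.symm hxy, hyz, ?_⟩
    ext w; simp only [Set.mem_insert_iff, Set.mem_singleton_iff]; tauto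
  · refine ⟨x, y, hxy, Ne.symm hxz, Ne.symm hyz, ?_⟩
    ext w; simp only [Set.mem_insert_iff, Set.mem_singleton_iff]; tauto

lemma use_of_mem (hX : IsGC 3 X) (hℓ : IsNodeLine 3 X ℓ) (hM : IsMaxLine 3 X M)
    (hdisj : M ∩ ℓ ∩ X = ∅) {P : Pt} (hP : P ∈ X \ (ℓ ∪ M)) : Uses 3 X ℓ P := by
  obtain ⟨fl, hfl, hfleq⟩ := hℓ.1
  obtain ⟨fm, hfm, hfmeq⟩ := hM.1
  have hlZ : ℓ = ZS fl := hfleq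
  have hmZ : M = ZS fm := hfmeq
  obtain ⟨Q, R', hQR, hPQ, hPR, hReq⟩ := three_rep (Rcard hX hℓ hM hdisj) hP
  obtain ⟨g, hg, hgQ, hgR⟩ := line_through hQR
  set q : BPoly := fl * (fm * g) with hq
  have hPnl : P ∉ ℓ := fun h => hP.2 (Or.inl h)
  have hPnm : P ∉ M := fun h => hP.2 (Or.inr h)
  have hevP : eval P q ≠ 0 := by
    rw [hq, map_mul, map_mul]
    refine mul_ne_zero ?_ (mul_ne_zero ?_ ?_)
    · intro h0; exact hPnl (by rw [hlZ]; exact h0)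
    · intro h0; exact hPnm (by rw [hmZ]; exact h0)
    · intro h0
      refine noncol hX hℓ hM hg ?_
      rw [hReq]
      rintro w (rfl | rfl | hw)
      · exact h0
      · exact hgQ
      · rw [Set.mem_singleton_iff] at hw; rw [hw]; exact hgR
  set cP : ℝ := eval P q with hcP
  refine ⟨C cP⁻¹ * q, fl, ⟨?_, ?_, ?_⟩, hfl, hfleq, ⟨C cP⁻¹ * (fm * g), by rw [hq]; ring⟩⟩
  · refine (totalDegree_mul _ _).trans ?_
    rw [totalDegree_C]
    have hdq : q.totalDegree ≤ 3 := by
      refine (totalDegree_mul _ _).trans ?_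
      have h2 : (fm * g).totalDegree ≤ 2 := (totalDegree_mul _ _).trans (by omega)
      omega
    omega
  · rw [map_mul, eval_C, ← hcP]
    field_simp
  · intro B hB hBP
    rw [map_mul]
    suffices h : eval B q = 0 by rw [h, mul_zero]
    rw [hq, map_mul, map_mul]
    by_cases h1 : B ∈ ℓ
    · rw [hlZ] at h1; rw [mem_ZS] at h1; rw [h1, zero_mul]
    · by_cases h2 : B ∈ M
      · rw [hmZ] at h2; rw [mem_ZS] at h2; rw [h2, zero_mul, mul_zero]
      · have hBR : B ∈ X \ (ℓ ∪ M) := ⟨hB, by simp [h1, h2]⟩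
        rw [hReq] at hBR
        rcases hBR with rfl | rfl | hw
        · exact absurd rfl hBP
        · rw [hgQ, mul_zero, mul_zero]
        · rw [Set.mem_singleton_iff] at hw; rw [hw, hgR, mul_zero, mul_zero]

lemma not_use_l (hX : IsGC 3 X) {P : Pt} (hPl : P ∈ ℓ) : ¬ Uses 3 X ℓ P := by
  rintro ⟨p, f, hfund, hdf, hleq, r, hr⟩
  have hPf : eval P f = 0 := by
    have : P ∈ {x : Pt | eval x f = 0} := hleq ▸ hPl
    exact this
  have : eval P p = 0 := by rw [hr, map_mul, hPf, zero_mul]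
  rw [hfund.2.1] at this
  exact one_ne_zero this

lemma not_use_M (hX : IsGC 3 X) (hℓ : IsNodeLine 3 X ℓ) (hM : IsMaxLine 3 X M)
    (hdisj : M ∩ ℓ ∩ X = ∅) {P : Pt} (hPX : P ∈ X) (hPM : P ∈ M) : ¬ Uses 3 X ℓ P := by
  intro huse
  have hXfin := poised_finite hX.1
  obtain ⟨fm, hfm, hfmeq⟩ := hM.1
  have hmZ : M = ZS fm := hfmeq
  obtain ⟨g, h, hdg, hdh, hPnl, hPg, hPh, hcov⟩ := user_lines hX hPX huse
  have hM4 : (X ∩ M).ncard = 4 := hM.2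
  have hT3 : ((X ∩ M) \ {P}).ncard = 3 := by
    rw [Set.ncard_diff_singleton_of_mem (Set.mem_inter hPX hPM), hM4]
  have hssg : (ZS g ∩ ZS fm).Subsingleton := by
    refine ZS_inter_subsingleton hdg hfm (fun he => ?_)
    exact hPg (by rw [he, ← hmZ]; exact hPM)
  have hssh : (ZS h ∩ ZS fm).Subsingleton := by
    refine ZS_inter_subsingleton hdh hfm (fun he => ?_)
    exact hPh (by rw [he, ← hmZ]; exact hPM)
  have hsub : (X ∩ M) \ {P} ⊆ (ZS g ∩ ZS fm) ∪ (ZS h ∩ ZS fm) := by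
    rintro B ⟨⟨hBX, hBM⟩, hBP⟩
    have hBnl : B ∉ ℓ := by
      intro hBl
      have : B ∈ M ∩ ℓ ∩ X := ⟨⟨hBM, hBl⟩, hBX⟩
      rw [hdisj] at this; exact this
    have hBm' : B ∈ ZS fm := by rw [← hmZ]; exact hBM
    rcases hcov B hBX with h1 | h1 | h1 | h1
    · exact absurd h1 hBnl
    · exact Or.inl ⟨h1, hBm'⟩
    · exact Or.inr ⟨h1, hBm'⟩
    · exact absurd h1 (by simpa using hBP)
  have hle := le_trans (Set.ncard_le_ncard hsub (hssg.finite.union hssh.finite))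
    (Set.ncard_union_le _ _)
  have l1 := ncard_le_one_ss hssg
  have l2 := ncard_le_one_ss hssh
  omega

lemma useSet_eq (hX : IsGC 3 X) (hℓ : IsNodeLine 3 X ℓ) (hM : IsMaxLine 3 X M)
    (hdisj : M ∩ ℓ ∩ X = ∅) : UseSet 3 X ℓ = X \ (ℓ ∪ M) := by
  ext z
  constructor
  · rintro ⟨hzX, hzu⟩
    refine ⟨hzX, ?_⟩
    rintro (h | h)
    · exact not_use_l hX h hzu
    · exact not_use_M hX hℓ hM hdisj hzX h hzu
  · intro hz
    exact ⟨hz.1, use_of_mem hX hℓ hM hdisj hz⟩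

end Backward

section Final
variable {X ℓ M : Set Pt}

lemma tri_fund (hX : IsGC 3 X) (hℓ : IsNodeLine 3 X ℓ) (hM : IsMaxLine 3 X M)
    (hdisj : M ∩ ℓ ∩ X = ∅) {P : Pt} (hP : P ∈ X \ (ℓ ∪ M)) :
    ∃ p : BPoly, p.totalDegree = 1 ∧ eval P p = 1 ∧
      ∀ B ∈ X \ (ℓ ∪ M), B ≠ P → eval B p = 0 := by
  obtain ⟨Q, R', hQR, hPQ, hPR, hReq⟩ := three_rep (Rcard hX hℓ hM hdisj) hP
  obtain ⟨g, hg, hgQ, hgR⟩ := line_through hQR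
  have hc : eval P g ≠ 0 := by
    intro h0
    refine noncol hX hℓ hM hg ?_
    rw [hReq]
    rintro w (rfl | rfl | hw)
    · exact h0
    · exact hgQ
    · rw [Set.mem_singleton_iff] at hw; rw [hw]; exact hgR
  set c : ℝ := eval P g with hcdef
  refine ⟨C c⁻¹ * g, ?_, ?_, ?_⟩
  · have hle : (C c⁻¹ * g).totalDegree ≤ 1 :=
      (totalDegree_mul _ _).trans (by rw [totalDegree_C, hg])
    have hCp : C c * (C c⁻¹ * g) = g := by
      rw [← mul_assoc, ← C_mul, mul_inv_cancel₀ hc, C_1, one_mul]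
    have hge : 1 ≤ (C c⁻¹ * g).totalDegree := by
      have h2 := totalDegree_mul (C c) (C c⁻¹ * g)
      rw [hCp, totalDegree_C, hg] at h2
      omega
    omega
  · rw [map_mul, eval_C, ← hcdef]
    field_simp
  · intro B hB hBP
    rw [hReq] at hB
    rcases hB with rfl | rfl | hw
    · exact absurd rfl hBP
    · rw [map_mul, hgQ, mul_zero]
    · rw [Set.mem_singleton_iff] at hw
      rw [map_mul, hw, hgR, mul_zero]

lemma interp_unique (hX : IsGC 3 X) (hℓ : IsNodeLine 3 X ℓ) (hM : IsMaxLine 3 X M)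
    (hdisj : M ∩ ℓ ∩ X = ∅) {p q : BPoly} (hpd : p.totalDegree ≤ 1) (hqd : q.totalDegree ≤ 1)
    (hpq : ∀ A ∈ X \ (ℓ ∪ M), eval A p = eval A q) : p = q := by
  have hR3 := Rcard hX hℓ hM hdisj
  obtain ⟨x0, hx0⟩ : (X \ (ℓ ∪ M)).Nonempty := by
    apply Set.nonempty_of_ncard_ne_zero; rw [hR3]; norm_num
  set d : BPoly := p - q with hddef
  have hdeg : d.totalDegree ≤ 1 := by
    have h : d = p + C (-1) * q := by rw [hddef]; ring_nf; rw [map_neg, C_1]; ring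
    rw [h]
    refine (totalDegree_add _ _).trans (max_le hpd ((totalDegree_mul _ _).trans ?_))
    rw [totalDegree_C]
    omega
  have hvan : ∀ A ∈ X \ (ℓ ∪ M), eval A d = 0 := by
    intro A hA
    rw [hddef, map_sub, sub_eq_zero]
    exact hpq A hA
  rw [← sub_eq_zero, ← hddef]
  by_contra hne
  have hcases : d.totalDegree = 1 ∨ d.totalDegree = 0 := by omega
  rcases hcases with h1 | h0
  · exact noncol hX hℓ hM h1 (fun w hw => hvan w hw)
  · have hC := deg0_eq_C h0
    have hcoeff : coeff 0 d = 0 := by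
      have := hvan x0 hx0
      rw [hC] at this
      simpa using this
    rw [hC, hcoeff, C_0] at hne
    exact hne rfl

lemma GC1 (hX : IsGC 3 X) (hℓ : IsNodeLine 3 X ℓ) (hM : IsMaxLine 3 X M)
    (hdisj : M ∩ ℓ ∩ X = ∅) : IsGC 1 (X \ (ℓ ∪ M)) := by
  have hR3 : (X \ (ℓ ∪ M)).ncard = 3 := Rcard hX hℓ hM hdisj
  obtain ⟨x, y, z, hxy, hxz, hyz, hReq⟩ := Set.ncard_eq_three.1 hR3
  have hxR : x ∈ X \ (ℓ ∪ M) := by rw [hReq]; simp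
  have hyR : y ∈ X \ (ℓ ∪ M) := by rw [hReq]; simp
  have hzR : z ∈ X \ (ℓ ∪ M) := by rw [hReq]; simp
  obtain ⟨px, hdx, hex, hvx⟩ := tri_fund hX hℓ hM hdisj hxR
  obtain ⟨py, hdy, hey, hvy⟩ := tri_fund hX hℓ hM hdisj hyR
  obtain ⟨pz, hdz, hez, hvz⟩ := tri_fund hX hℓ hM hdisj hzR
  constructor
  · constructor
    · rw [hR3]
    · intro cf
      set pc : BPoly := C (cf x) * px + C (cf y) * py + C (cf z) * pz with hpc
      have hdc : pc.totalDegree ≤ 1 := by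
        rw [hpc]
        refine (totalDegree_add _ _).trans (max_le ((totalDegree_add _ _).trans
          (max_le ?_ ?_)) ?_) <;>
        · refine (totalDegree_mul _ _).trans ?_
          simp [totalDegree_C, hdx, hdy, hdz]
      have hec : ∀ A ∈ X \ (ℓ ∪ M), eval A pc = cf A := by
        intro A hA
        have hA' := hA
        rw [hReq] at hA'
        simp only [Set.mem_insert_iff, Set.mem_singleton_iff] at hA'
        rcases hA' with h | h | h
        · have e1 : eval A px = 1 := by rw [h]; exact hex
          have e2 : eval A py = 0 := hvy A hA (by rw [h]; exact hxy)
          have e3 : eval A pz = 0 := hvz A hA (by rw [h]; exact hxz)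
          rw [hpc, map_add, map_add, map_mul, map_mul, map_mul, eval_C, eval_C, eval_C,
            e1, e2, e3, h]
          ring
        · have e1 : eval A px = 0 := hvx A hA (by rw [h]; exact Ne.symm hxy)
          have e2 : eval A py = 1 := by rw [h]; exact hey
          have e3 : eval A pz = 0 := hvz A hA (by rw [h]; exact hyz)
          rw [hpc, map_add, map_add, map_mul, map_mul, map_mul, eval_C, eval_C, eval_C,
            e1, e2, e3, h]
          ring
        · have e1 : eval A px = 0 := hvx A hA (by rw [h]; exact Ne.symm hxz)
          have e2 : eval A py = 0 := hvy A hA (by rw [h]; exact Ne.symm hyz)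
          have e3 : eval A pz = 1 := by rw [h]; exact hez
          rw [hpc, map_add, map_add, map_mul, map_mul, map_mul, eval_C, eval_C, eval_C,
            e1, e2, e3, h]
          ring
      exact ⟨pc, ⟨hdc, hec⟩, fun q hq => interp_unique hX hℓ hM hdisj hq.1 hdc
        (fun A hA => by rw [hq.2 A hA, hec A hA])⟩
  · intro A hA
    obtain ⟨p, hdp, hep, hvp⟩ := tri_fund hX hℓ hM hdisj hA
    exact ⟨p, ⟨le_of_eq hdp, hep, fun B hB hBP => hvp B hB hBP⟩,
      fun _ => p, fun _ => hdp, (Fin.prod_univ_one (fun _ : Fin 1 => p)).symm⟩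

lemma other_max (hX : IsGC 3 X) (hℓ : IsNodeLine 3 X ℓ) (hM : IsMaxLine 3 X M)
    (hdisj : M ∩ ℓ ∩ X = ∅) {M' : Set Pt} (hM' : IsMaxLine 3 X M') (hne : M' ≠ M) :
    (M' ∩ ℓ ∩ X).Nonempty ∧ (M' ∩ UseSet 3 X ℓ).ncard = 2 := by
  have hXfin := poised_finite hX.1
  have hU := useSet_eq hX hℓ hM hdisj
  have hR3 : (X \ (ℓ ∪ M)).ncard = 3 := Rcard hX hℓ hM hdisj
  obtain ⟨fl, hfl, hfleq⟩ := hℓ.1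
  obtain ⟨fm, hfm, hfmeq⟩ := hM.1
  obtain ⟨fm', hfm', hfmeq'⟩ := hM'.1
  have hlZ : ℓ = ZS fl := hfleq
  have hmZ : M = ZS fm := hfmeq
  have hmZ' : M' = ZS fm' := hfmeq'
  have hM4 : (X ∩ M).ncard = 4 := hM.2
  have hM4' : (X ∩ M').ncard = 4 := hM'.2
  -- (1) M' meets ℓ in a node
  have hne1 : (M' ∩ ℓ ∩ X).Nonempty := by
    by_contra hemp
    rw [Set.not_nonempty_iff_eq_empty] at hemp
    have hU' := useSet_eq hX hℓ hM' hemp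
    have hRR : X \ (ℓ ∪ M) = X \ (ℓ ∪ M') := by rw [← hU, hU']
    have hMM : X ∩ M' = X ∩ M := by
      ext w
      constructor
      · rintro ⟨hwX, hwM'⟩
        refine ⟨hwX, ?_⟩
        by_contra hwM
        have hwl : w ∉ ℓ := fun h => by
          have : w ∈ M' ∩ ℓ ∩ X := ⟨⟨hwM', h⟩, hwX⟩
          rw [hemp] at this; exact this
        have : w ∈ X \ (ℓ ∪ M') := hRR ▸ (⟨hwX, by simp [hwl, hwM]⟩ : w ∈ X \ (ℓ ∪ M))
        exact this.2 (Or.inr hwM')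
      · rintro ⟨hwX, hwM⟩
        refine ⟨hwX, ?_⟩
        by_contra hwM'
        have hwl : w ∉ ℓ := fun h => by
          have : w ∈ M ∩ ℓ ∩ X := ⟨⟨hwM, h⟩, hwX⟩
          rw [hdisj] at this; exact this
        have : w ∈ X \ (ℓ ∪ M) := hRR.symm ▸ (⟨hwX, by simp [hwl, hwM']⟩ : w ∈ X \ (ℓ ∪ M'))
        exact this.2 (Or.inr hwM)
    obtain ⟨w, v, hw, hv, hwv⟩ :=
      (Set.one_lt_ncard_iff (s := X ∩ M') (hXfin.inter_of_left _)).1 (by omega)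
    have hw2 : w ∈ X ∩ M := hMM ▸ hw
    have hv2 : v ∈ X ∩ M := hMM ▸ hv
    have heq : ZS fm' = ZS fm := by
      refine ZS_eq_of_two hfm' hfm hwv ?_ ?_ ?_ ?_
      · exact (hmZ' ▸ hw.2 : w ∈ ZS fm')
      · exact (hmZ' ▸ hv.2 : v ∈ ZS fm')
      · exact (hmZ ▸ hw2.2 : w ∈ ZS fm)
      · exact (hmZ ▸ hv2.2 : v ∈ ZS fm)
    exact hne (by rw [hmZ', hmZ, heq])
  refine ⟨hne1, ?_⟩
  -- (2) counting
  have hE1ss : (M' ∩ ℓ ∩ X).Subsingleton := by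
    have hsub : M' ∩ ℓ ∩ X ⊆ ZS fm' ∩ ZS fl := by
      rintro w ⟨⟨h1, h2⟩, -⟩
      exact ⟨hmZ' ▸ h1, hlZ ▸ h2⟩
    refine Set.Subsingleton.anti ?_ hsub
    refine ZS_inter_subsingleton hfm' hfl (fun he => ?_)
    have : M' = ℓ := by rw [hmZ', hlZ, he]
    rw [this, hℓ.2] at hM4'
    omega
  have hE2ss : (M' ∩ M ∩ X).Subsingleton := by
    have hsub : M' ∩ M ∩ X ⊆ ZS fm' ∩ ZS fm := by
      rintro w ⟨⟨h1, h2⟩, -⟩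
      exact ⟨hmZ' ▸ h1, hmZ ▸ h2⟩
    refine Set.Subsingleton.anti ?_ hsub
    refine ZS_inter_subsingleton hfm' hfm (fun he => ?_)
    exact hne (by rw [hmZ', hmZ, he])
  have hUfin : (UseSet 3 X ℓ).Finite := by
    rw [hU]; exact hXfin.diff
  have hU3 : (UseSet 3 X ℓ).ncard = 3 := by rw [hU]; exact hR3
  -- E2 nonempty
  have hE2ne : (M' ∩ M ∩ X).Nonempty := by
    by_contra hemp
    rw [Set.not_nonempty_iff_eq_empty] at hemp
    have hcov : X ∩ M' ⊆ (M' ∩ ℓ ∩ X) ∪ (M' ∩ UseSet 3 X ℓ) := by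
      rintro w ⟨hwX, hwM'⟩
      by_cases h1 : w ∈ ℓ
      · exact Or.inl ⟨⟨hwM', h1⟩, hwX⟩
      · by_cases h2 : w ∈ M
        · exact absurd (show w ∈ M' ∩ M ∩ X from ⟨⟨hwM', h2⟩, hwX⟩) (by rw [hemp]; simp)
        · exact Or.inr ⟨hwM', by rw [hU]; exact ⟨hwX, by simp [h1, h2]⟩⟩
    have hle := le_trans (Set.ncard_le_ncard hcov
      (hE1ss.finite.union (hUfin.inter_of_right _))) (Set.ncard_union_le _ _)
    have l1 := ncard_le_one_ss hE1ss
    have l3 : (M' ∩ UseSet 3 X ℓ).ncard ≤ 3 := by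
      refine le_trans (Set.ncard_le_ncard Set.inter_subset_right hUfin) (le_of_eq hU3)
    have hge3 : 3 ≤ (M' ∩ UseSet 3 X ℓ).ncard := by omega
    have heqU : M' ∩ UseSet 3 X ℓ = UseSet 3 X ℓ :=
      Set.eq_of_subset_of_ncard_le Set.inter_subset_right (by omega) hUfin
    have hsubM' : X \ (ℓ ∪ M) ⊆ ZS fm' := by
      intro w hw
      have : w ∈ M' ∩ UseSet 3 X ℓ := by rw [heqU, hU]; exact hw
      exact hmZ' ▸ this.1
    exact noncol hX hℓ hM hfm' hsubM'
  -- decomposition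
  have hdecomp : X ∩ M' = ((M' ∩ ℓ ∩ X) ∪ (M' ∩ M ∩ X)) ∪ (M' ∩ UseSet 3 X ℓ) := by
    ext w
    constructor
    · rintro ⟨hwX, hwM'⟩
      by_cases h1 : w ∈ ℓ
      · exact Or.inl (Or.inl ⟨⟨hwM', h1⟩, hwX⟩)
      · by_cases h2 : w ∈ M
        · exact Or.inl (Or.inr ⟨⟨hwM', h2⟩, hwX⟩)
        · exact Or.inr ⟨hwM', by rw [hU]; exact ⟨hwX, by simp [h1, h2]⟩⟩
    · rintro ((⟨⟨h1, h2⟩, h3⟩ | ⟨⟨h1, h2⟩, h3⟩) | ⟨h1, h2⟩)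
      · exact ⟨h3, h1⟩
      · exact ⟨h3, h1⟩
      · have : w ∈ X := by rw [hU] at h2; exact h2.1
        exact ⟨this, h1⟩
  have hd1 : Disjoint (M' ∩ ℓ ∩ X) (M' ∩ M ∩ X) := by
    rw [Set.disjoint_iff]
    rintro w ⟨⟨⟨-, h2⟩, h3⟩, ⟨⟨-, h5⟩, -⟩⟩
    have : w ∈ M ∩ ℓ ∩ X := ⟨⟨h5, h2⟩, h3⟩
    rw [hdisj] at this; exact this
  have hd2 : Disjoint ((M' ∩ ℓ ∩ X) ∪ (M' ∩ M ∩ X)) (M' ∩ UseSet 3 X ℓ) := by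
    rw [Set.disjoint_iff]
    rintro w ⟨hw1, ⟨-, hw2⟩⟩
    have hwR : w ∈ X \ (ℓ ∪ M) := by rw [← hU]; exact hw2
    rcases hw1 with ⟨⟨-, h2⟩, -⟩ | ⟨⟨-, h2⟩, -⟩
    · exact hwR.2 (Or.inl h2)
    · exact hwR.2 (Or.inr h2)
  have hE1 : (M' ∩ ℓ ∩ X).ncard = 1 := by
    obtain ⟨a, ha⟩ := hne1
    rw [Set.ncard_eq_one]
    exact ⟨a, Set.eq_singleton_iff_unique_mem.2 ⟨ha, fun b hb => hE1ss hb ha⟩⟩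
  have hE2 : (M' ∩ M ∩ X).ncard = 1 := by
    obtain ⟨a, ha⟩ := hE2ne
    rw [Set.ncard_eq_one]
    exact ⟨a, Set.eq_singleton_iff_unique_mem.2 ⟨ha, fun b hb => hE2ss hb ha⟩⟩
  have hcount : (X ∩ M').ncard =
      ((M' ∩ ℓ ∩ X) ∪ (M' ∩ M ∩ X)).ncard + (M' ∩ UseSet 3 X ℓ).ncard := by
    rw [hdecomp]
    exact Set.ncard_union_eq hd2 (hE1ss.finite.union hE2ss.finite) (hUfin.inter_of_right _)
  have hcount2 : ((M' ∩ ℓ ∩ X) ∪ (M' ∩ M ∩ X)).ncard = 2 := by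
    rw [Set.ncard_union_eq hd1 hE1ss.finite hE2ss.finite, hE1, hE2]
  omega
end Final

end St5

/-- For a `GC_3` set `X` and a `3`-node line `ℓ`: `|X_ℓ| = 3` iff there is a
maximal line `M₀` with `M₀ ∩ ℓ ∩ X = ∅`; in this case `X_ℓ = X \ (ℓ ∪ M₀)` is a `GC_1` set,
and every other maximal line `M` meets `ℓ` at a node and satisfies `|M ∩ X_ℓ| = 2`. -/
theorem GC3_useSet_card_eq_three_iff (X ℓ : Set Pt) (hX : IsGC 3 X)
    (hℓ : IsNodeLine 3 X ℓ) :
    ((UseSet 3 X ℓ).ncard = 3 ↔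
      ∃ M₀ : Set Pt, IsMaxLine 3 X M₀ ∧ M₀ ∩ ℓ ∩ X = ∅) ∧
    ((UseSet 3 X ℓ).ncard = 3 →
      ∃ M₀ : Set Pt, IsMaxLine 3 X M₀ ∧ M₀ ∩ ℓ ∩ X = ∅ ∧
        UseSet 3 X ℓ = X \ (ℓ ∪ M₀) ∧ IsGC 1 (UseSet 3 X ℓ) ∧
        ∀ M : Set Pt, IsMaxLine 3 X M → M ≠ M₀ →
          (M ∩ ℓ ∩ X).Nonempty ∧ (M ∩ UseSet 3 X ℓ).ncard = 2) := by
  constructor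
  · constructor
    · exact fun h3 => St5.forward hX hℓ h3
    · rintro ⟨M₀, hM₀, hdisj⟩
      rw [St5.useSet_eq hX hℓ hM₀ hdisj]
      exact St5.Rcard hX hℓ hM₀ hdisj
  · intro h3
    obtain ⟨M₀, hM₀, hdisj⟩ := St5.forward hX hℓ h3
    refine ⟨M₀, hM₀, hdisj, St5.useSet_eq hX hℓ hM₀ hdisj, ?_, ?_⟩
    · rw [St5.useSet_eq hX hℓ hM₀ hdisj]
      exact St5.GC1 hX hℓ hM₀ hdisj
    · exact fun M hM hne => St5.other_max hX hℓ hM₀ hdisj hM hne
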